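/- Let S be a closed convex subsemigroup of B(Z) containing the identity. Then S − id ⊆ L(S), i.e., for every A ∈ S the operator A − id lies in the Lie wedge of S. -/

import Mathlib

set_option maxHeartbeats 1000000
set_option synthInstance.maxHeartbeats 400000

open NormedSpace

/-- If `S` is a closed convex subsemigroup of the bounded operators containing the identity,
then `S - id ⊆ L(S)`: for every `A ∈ S`, the operator `A - id` lies in the Lie wedge of `S`. -/
theorem stmt_4 {Z : Type*} [NormedAddCommGroup Z] [NormedSpace ℝ Z] [FiniteDimensional ℝ Z]
    (S : Set (Z →L[ℝ] Z)) (hSclosed : IsClosed S) (hSconv : Convex ℝ S)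
    (hid : ContinuousLinearMap.id ℝ Z ∈ S)
    (hmul : ∀ A ∈ S, ∀ B ∈ S, A.comp B ∈ S) :
    ∀ A ∈ S, ∀ t : ℝ, 0 ≤ t → exp (t • (A - ContinuousLinearMap.id ℝ Z)) ∈ S := by
  intro A hA t ht
  have hone : (1 : Z →L[ℝ] Z) = ContinuousLinearMap.id ℝ Z := rfl
  -- powers of A stay in S
  have hpow : ∀ n : ℕ, A ^ n ∈ S := by
    intro n
    induction n with
    | zero => simpa [hone] using hid
    | succ n ih =>
      rw [pow_succ]
      exact hmul (A ^ n) ih A hA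
  -- the weights
  set w : ℕ → ℝ := fun n => Real.exp (-t) * (t ^ n / (n.factorial : ℝ)) with hw
  have hw_nonneg : ∀ n, 0 ≤ w n := fun n =>
    mul_nonneg (Real.exp_nonneg _) (div_nonneg (pow_nonneg ht _) (by positivity))
  -- the weights sum to 1
  have hexpR : ∀ s : ℝ, exp s = Real.exp s := fun s => (congrFun Real.exp_eq_exp_ℝ s).symm
  have hsum1 : HasSum w 1 := by
    have h := NormedSpace.expSeries_div_hasSum_exp (𝔸 := ℝ) t
    have h2 := h.mul_left (Real.exp (-t))
    have : Real.exp (-t) * exp t = 1 := by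
      rw [hexpR, ← Real.exp_add]; simp
    rwa [this] at h2
  -- the series sums to the exponential
  have hkey : exp (t • (A - ContinuousLinearMap.id ℝ Z)) = Real.exp (-t) • exp (t • A) := by
    have hcomm : Commute ((-t) • (1 : Z →L[ℝ] Z)) (t • A) := by
      exact (Commute.one_left (t • A)).smul_left (-t)
    calc exp (t • (A - ContinuousLinearMap.id ℝ Z))
        = exp ((-t) • (1 : Z →L[ℝ] Z) + t • A) := by
          rw [← hone]; congr 1; rw [smul_sub, sub_eq_neg_add, ← neg_smul]
      _ = exp ((-t) • (1 : Z →L[ℝ] Z)) * exp (t • A) := exp_add_of_commute_of_mem_ball (𝕂 := ℝ) (𝔸 := Z →L[ℝ] Z) hcomm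
          ((expSeries_radius_eq_top ℝ (Z →L[ℝ] Z)).symm ▸ edist_lt_top _ _)
          ((expSeries_radius_eq_top ℝ (Z →L[ℝ] Z)).symm ▸ edist_lt_top _ _)
      _ = Real.exp (-t) • exp (t • A) := by
          have : ((-t) • (1 : Z →L[ℝ] Z)) = algebraMap ℝ (Z →L[ℝ] Z) (-t) := by
            simp [Algebra.algebraMap_eq_smul_one]
          rw [this, ← algebraMap_exp_comm, hexpR,
            Algebra.algebraMap_eq_smul_one, smul_mul_assoc, one_mul]
  have hop : HasSum (fun n => w n • A ^ n) (exp (t • (A - ContinuousLinearMap.id ℝ Z))) := by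
    rw [hkey]
    have h := NormedSpace.exp_series_hasSum_exp' (𝕂 := ℝ) (t • A)
    have h2 := h.const_smul (Real.exp (-t))
    convert h2 using 2 with n
    · rfl
    · rfl
    rw [smul_smul, smul_pow, smul_smul]
    congr 1
    rw [hw]
    ring_nf
  -- partial sums
  set c : ℕ → ℝ := fun N => ∑ n ∈ Finset.range N, w n with hc
  have hc_tend : Filter.Tendsto c Filter.atTop (nhds 1) := hsum1.tendsto_sum_nat
  have hc_pos : ∀ N, 0 < c (N + 1) := by
    intro N
    have h0 : 0 < w 0 := by simp [hw, Real.exp_pos]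
    calc (0:ℝ) < w 0 := h0
      _ ≤ ∑ n ∈ Finset.range (N+1), w n :=
        Finset.single_le_sum (fun n _ => hw_nonneg n) (Finset.mem_range.mpr (Nat.succ_pos N))
  -- normalized partial sums lie in S
  set x : ℕ → (Z →L[ℝ] Z) := fun N => (c (N+1))⁻¹ • ∑ n ∈ Finset.range (N+1), w n • A ^ n with hx
  have hxS : ∀ N, x N ∈ S := by
    intro N
    have := hSconv.sum_mem (t := Finset.range (N+1)) (w := fun n => (c (N+1))⁻¹ * w n)
      (z := fun n => A ^ n)
      (fun n _ => mul_nonneg (le_of_lt (inv_pos.mpr (hc_pos N))) (hw_nonneg n))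
      (by rw [← Finset.mul_sum]; exact inv_mul_cancel₀ (ne_of_gt (hc_pos N)))
      (fun n _ => hpow n)
    simpa [hx, Finset.smul_sum, mul_smul] using this
  -- x N tends to the exponential
  have hx_tend : Filter.Tendsto x Filter.atTop
      (nhds (exp (t • (A - ContinuousLinearMap.id ℝ Z)))) := by
    have h1 : Filter.Tendsto (fun N => (c (N+1))⁻¹) Filter.atTop (nhds 1) := by
      have := (hc_tend.comp (Filter.tendsto_add_atTop_nat 1)).inv₀ one_ne_zero
      simpa using this
    have h2 : Filter.Tendsto (fun N => ∑ n ∈ Finset.range (N+1), w n • A ^ n) Filter.atTop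
        (nhds (exp (t • (A - ContinuousLinearMap.id ℝ Z)))) :=
      hop.tendsto_sum_nat.comp (Filter.tendsto_add_atTop_nat 1)
    have := h1.smul h2
    simpa [hx] using this
  exact hSclosed.mem_of_tendsto hx_tend (Filter.Eventually.of_forall hxS)
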